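/- Let I ⊆ ℝ be an open interval, V : ℝ → ℝ, ε, ε̄ ∈ ℝ, and V̄ : ℝ → ℝ. Let α, β, δ : ℝ → ℝ be differentiable and γ : ℝ → ℝ twice differentiable on I, with α(x)δ(x) - β(x)γ(x) = 1, γ(x) ≠ 0 and α(x) ≠ 0 for all x ∈ I. Suppose that for all x ∈ I: (i) -1 = -δ² + γ²(V - ε) + γδ' - δγ', (ii) 0 = 2βδ - 2αγ(V - ε) + δα' - αδ' + βγ' - γβ', and (iii) V̄ - ε̄ = -β² + α²(V - ε) + αβ' - βα'. Then on I: α = δ + γ', the function v = -δ/γ satisfies the Riccati equation v' + v² = V + 1/γ² - ε, and V̄ - ε̄ = V - 2·((γ'/γ)·v + v') + γ''/γ - ε. -/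

import Mathlib

/-- **Characterization of the group elements preserving the Schrödinger
subset of Riccati equations.** Suppose the SL(2,ℝ)-valued curve
`A = [[α, β], [γ, δ]]` (with `αδ - βγ = 1`, `γ ≠ 0`, `α ≠ 0` on the open
interval `I`) transforms the Riccati equation `w' = -w² + V - ε` into one of
the same form `w̄' = -w̄² + V̄ - ε̄`, i.e. conditions (i)–(iii) hold.
Then on `I`: `α = δ + γ'`, the function `v = -δ/γ` solves the Riccati
equation `v' + v² = V + 1/γ² - ε`, and
`V̄ - ε̄ = V - 2((γ'/γ)v + v') + γ''/γ - ε`. -/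
theorem preserving_group_elements
    (I : Set ℝ) (hI : IsOpen I)
    (V Vbar : ℝ → ℝ) (ε εbar : ℝ)
    (α β γ δ α' β' γ' δ' γ'' : ℝ → ℝ)
    (hα : ∀ x ∈ I, HasDerivAt α (α' x) x)
    (hβ : ∀ x ∈ I, HasDerivAt β (β' x) x)
    (hγ : ∀ x ∈ I, HasDerivAt γ (γ' x) x)
    (hγ' : ∀ x ∈ I, HasDerivAt γ' (γ'' x) x)
    (hδ : ∀ x ∈ I, HasDerivAt δ (δ' x) x)
    (hdet : ∀ x ∈ I, α x * δ x - β x * γ x = 1)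
    (hγ0 : ∀ x ∈ I, γ x ≠ 0) (hα0 : ∀ x ∈ I, α x ≠ 0)
    (h1 : ∀ x ∈ I,
      -1 = -(δ x) ^ 2 + (γ x) ^ 2 * (V x - ε) + γ x * δ' x - δ x * γ' x)
    (h2 : ∀ x ∈ I,
      0 = 2 * β x * δ x - 2 * α x * γ x * (V x - ε)
        + δ x * α' x - α x * δ' x + β x * γ' x - γ x * β' x)
    (h3 : ∀ x ∈ I,
      Vbar x - εbar = -(β x) ^ 2 + (α x) ^ 2 * (V x - ε)
        + α x * β' x - β x * α' x) :
    (∀ x ∈ I, α x = δ x + γ' x) ∧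
    (∀ x ∈ I,
      HasDerivAt (fun y => -δ y / γ y)
        ((V x + 1 / (γ x) ^ 2 - ε) - (-δ x / γ x) ^ 2) x) ∧
    (∀ x ∈ I,
      Vbar x - εbar
        = V x
          - 2 * ((γ' x / γ x) * (-δ x / γ x)
                  + deriv (fun y => -δ y / γ y) x)
          + γ'' x / γ x - ε) := by

  -- derivative of the determinant vanishes
  have hdetd : ∀ x ∈ I,
      α' x * δ x + α x * δ' x - (β' x * γ x + β x * γ' x) = 0 := by
    intro x hx
    have hD : HasDerivAt (fun y => α y * δ y - β y * γ y)
        (α' x * δ x + α x * δ' x - (β' x * γ x + β x * γ' x)) x :=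
      ((hα x hx).mul (hδ x hx)).sub ((hβ x hx).mul (hγ x hx))
    have hC : HasDerivAt (fun y => α y * δ y - β y * γ y) 0 x := by
      have he : (fun y => α y * δ y - β y * γ y) =ᶠ[nhds x] fun _ => (1:ℝ) := by
        filter_upwards [hI.mem_nhds hx] with y hy using hdet y hy
      exact (hasDerivAt_const x (1:ℝ)).congr_of_eventuallyEq he
    exact hD.unique hC
  have g1 : ∀ x ∈ I, α x = δ x + γ' x := by
    intro x hx
    have e1 := h1 x hx
    have e2 := h2 x hx
    have eb := hdetd x hx
    have ed := hdet x hx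
    linear_combination (-(α x)) * e1 + (-(γ x)/2) * e2 + (-(γ x)/2) * eb
      + (γ' x + δ x) * ed
  have g2 : ∀ x ∈ I,
      HasDerivAt (fun y => -δ y / γ y)
        ((V x + 1 / (γ x) ^ 2 - ε) - (-δ x / γ x) ^ 2) x := by
    intro x hx
    have hd : HasDerivAt (fun y => -δ y / γ y)
        ((-δ' x * γ x - (-δ x) * γ' x) / γ x ^ 2) x :=
      ((hδ x hx).neg).div (hγ x hx) (hγ0 x hx)
    have key : (-δ' x * γ x - (-δ x) * γ' x) / γ x ^ 2
        = (V x + 1 / (γ x) ^ 2 - ε) - (-δ x / γ x) ^ 2 := by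
      have hne := hγ0 x hx
      field_simp
      linear_combination (h1 x hx)
    rwa [key] at hd
  refine ⟨g1, g2, ?_⟩
  intro x hx
  have hαd : α' x = δ' x + γ'' x := by
    have hd : HasDerivAt α (δ' x + γ'' x) x := by
      have h : HasDerivAt (fun y => δ y + γ' y) (δ' x + γ'' x) x :=
        (hδ x hx).add (hγ' x hx)
      apply h.congr_of_eventuallyEq
      filter_upwards [hI.mem_nhds hx] with y hy using g1 y hy
    exact (hα x hx).unique hd
  rw [(g2 x hx).deriv, h3 x hx]
  have hne := hγ0 x hx
  have e1 := h1 x hx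
  have e2 := h2 x hx
  have eb := hdetd x hx
  have ed := hdet x hx
  have ea := g1 x hx
  field_simp
  linear_combination ((γ x * β x + γ x * α' x - 1) * ed
    + (-(γ x) * α x / 2) * (-e2) + (-(γ x) * α x / 2) * eb
    + (δ x) * (ea) + (γ x) * hαd + (-e1))
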